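/- Let (G, ω, μ) be a weighted graph with a pseudo metric d of finite jump size s, let x₀ ∈ G, let β ∈ (0,1], R₀ > 0 and r ≥ 2s + R₀, and set ρ(x) := max{d(x,x₀)^β, r^β}. Then |ρ(x) − ρ(y)| ≤ β R₀^{β−1} d(x,y) for all x, y ∈ G with x ∼ y. -/

import Mathlib

private lemma key_concave {β R₀ c a : ℝ} (hβ₀ : 0 < β) (hβ₁ : β ≤ 1)
    (hR : 0 < R₀) (hRc : R₀ ≤ c) (hca : c ≤ a) :
    a ^ β - c ^ β ≤ β * R₀ ^ (β - 1) * (a - c) := by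
  have hc : 0 < c := hR.trans_le hRc
  have ha : 0 < a := hc.trans_le hca
  have htnn : 0 ≤ (a - c) / c := div_nonneg (by linarith) hc.le
  have hB := rpow_one_add_le_one_add_mul_self (by linarith : (-1:ℝ) ≤ (a - c) / c) hβ₀.le hβ₁
  have heq : 1 + (a - c) / c = a / c := by field_simp; ring
  rw [heq] at hB
  rw [Real.div_rpow ha.le hc.le] at hB
  have hcb : (0:ℝ) < c ^ β := Real.rpow_pos_of_pos hc β
  have h1 : a ^ β ≤ c ^ β * (1 + β * ((a - c) / c)) := by
    rw [div_le_iff₀ hcb] at hB; linarith [hB]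
  have h2 : c ^ β * (1 + β * ((a - c) / c)) = c ^ β + β * c ^ (β - 1) * (a - c) := by
    rw [Real.rpow_sub hc, Real.rpow_one]
    field_simp
  have h3 : c ^ (β - 1) ≤ R₀ ^ (β - 1) :=
    Real.rpow_le_rpow_of_nonpos hR hRc (by linarith)
  have h4 : β * c ^ (β - 1) * (a - c) ≤ β * R₀ ^ (β - 1) * (a - c) := by
    apply mul_le_mul_of_nonneg_right _ (by linarith)
    exact mul_le_mul_of_nonneg_left h3 hβ₀.le
  linarith [h1, h2 ▸ h1]

private lemma max_rpow {u v β : ℝ} (hu : 0 ≤ u) (hv : 0 ≤ v) (hβ : 0 ≤ β) :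
    max u v ^ β = max (u ^ β) (v ^ β) := by
  rcases le_total u v with h | h
  · rw [max_eq_right h, max_eq_right (Real.rpow_le_rpow hu h hβ)]
  · rw [max_eq_left h, max_eq_left (Real.rpow_le_rpow hv h hβ)]

/-- **Step I of Lemma 5.1.** With `ρ(x) = max{d(x,x₀)^β, r^β}`, `β ∈ (0,1]`,
`R₀ > 0` and `r ≥ 2s + R₀`, one has `|ρ(x) − ρ(y)| ≤ β R₀^{β−1} d(x,y)`
whenever `x ∼ y`. -/
theorem stmt8 {G : Type*} [Countable G] [Infinite G]
    (μ : G → ℝ) (ω : G → G → ℝ) (d : G → G → ℝ)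
    (hμ : ∀ x, 0 < μ x)
    (hω_symm : ∀ x y, ω x y = ω y x)
    (hω_diag : ∀ x, ω x x = 0)
    (hω_nonneg : ∀ x y, 0 ≤ ω x y)
    (hω_sum : ∀ x, Summable fun y => ω x y)
    (hd_symm : ∀ x y, d x y = d y x)
    (hd_diag : ∀ x, d x x = 0)
    (hd_nonneg : ∀ x y, 0 ≤ d x y)
    (hd_tri : ∀ x y z, d x y ≤ d x z + d z y)
    (s : ℝ) (hs : ∀ x y, 0 < ω x y → d x y ≤ s)
    (x₀ : G) (β R₀ r : ℝ)
    (hβ₀ : 0 < β) (hβ₁ : β ≤ 1) (hR₀ : 0 < R₀) (hr : 2 * s + R₀ ≤ r)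
    (ρ : G → ℝ) (hρ : ∀ x, ρ x = max (d x x₀ ^ β) (r ^ β)) :
    ∀ x y : G, 0 < ω x y → |ρ x - ρ y| ≤ β * R₀ ^ (β - 1) * d x y := by
  intro x y hxy
  have hs0 : 0 ≤ s := (hd_nonneg x y).trans (hs x y hxy)
  have hrR : R₀ ≤ r := by linarith
  have hr0 : 0 < r := hR₀.trans_le hrR
  set a := d x x₀ with ha
  set b := d y x₀ with hb
  have hab : |a - b| ≤ d x y := by
    rw [abs_sub_le_iff]
    constructor
    · have := hd_tri x x₀ y; linarith [this]
    · have := hd_tri y x₀ x; rw [hd_symm y x] at this; linarith [this]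
  set A := max a r with hA
  set B := max b r with hB
  have hAB : |A - B| ≤ d x y := (abs_max_sub_max_le_abs a b r).trans hab
  have hρx : ρ x = A ^ β := by
    rw [hρ x, ← max_rpow (hd_nonneg x x₀) hr0.le hβ₀.le]
  have hρy : ρ y = B ^ β := by
    rw [hρ y, ← max_rpow (hd_nonneg y x₀) hr0.le hβ₀.le]
  have hAr : R₀ ≤ A := hrR.trans (le_max_right a r)
  have hBr : R₀ ≤ B := hrR.trans (le_max_right b r)
  rw [hρx, hρy, abs_sub_le_iff]
  constructor
  · rcases le_total A B with h | h
    · have : A ^ β ≤ B ^ β := Real.rpow_le_rpow (hR₀.le.trans hAr) h hβ₀.le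
      have hpos : 0 ≤ β * R₀ ^ (β - 1) * d x y := mul_nonneg (mul_nonneg hβ₀.le (Real.rpow_nonneg hR₀.le _)) (hd_nonneg x y)
      linarith
    · have := key_concave hβ₀ hβ₁ hR₀ hBr h
      have h2 : A - B ≤ d x y := by
        have := le_abs_self (A - B); linarith [hAB]
      have h3 : β * R₀ ^ (β - 1) * (A - B) ≤ β * R₀ ^ (β - 1) * d x y := by
        apply mul_le_mul_of_nonneg_left h2 (mul_nonneg hβ₀.le (Real.rpow_nonneg hR₀.le _))
      linarith
  · rcases le_total B A with h | h
    · have : B ^ β ≤ A ^ β := Real.rpow_le_rpow (hR₀.le.trans hBr) h hβ₀.le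
      have hpos : 0 ≤ β * R₀ ^ (β - 1) * d x y := mul_nonneg (mul_nonneg hβ₀.le (Real.rpow_nonneg hR₀.le _)) (hd_nonneg x y)
      linarith
    · have := key_concave hβ₀ hβ₁ hR₀ hAr h
      have h2 : B - A ≤ d x y := by
        have := neg_abs_le (A - B); linarith [hAB]
      have h3 : β * R₀ ^ (β - 1) * (B - A) ≤ β * R₀ ^ (β - 1) * d x y := by
        apply mul_le_mul_of_nonneg_left h2 (mul_nonneg hβ₀.le (Real.rpow_nonneg hR₀.le _))
      linarith
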